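/- In System D, if μ̃x.c is a call-by-need covalue (i.e. c = H[⟨x ‖ E⟩] for a heap context H not binding x and a call-by-need covalue E), then the command c admits no standard reduction step. Dually, if μα.c is a call-by-coneed value, then c admits no standard reduction step. -/
import Mathlib


/-!  System D / System CD: a core, fully dual, multi-discipline sequent
     calculus with user-declared data and codata types (the connectives of
     the core System D — ⊕, ⊗, 0, 1, &, ⅋, ⊤, ⊥, ¬, ∼ and the four families
     of polarity shifts — arise as particular declarations), together with
     native existential and universal type quantifiers. -/

namespace SysD

/-- Evaluation disciplines: call-by-value (+), call-by-name (−),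
    call-by-need (lv) and call-by-coneed (ln). -/
inductive Disc : Type
| pos | neg | lv | ln
deriving DecidableEq

/-- Types: discipline-annotated type variables, declared connectives applied
    to type arguments, and the existential/universal quantifiers. -/
inductive Ty : Type
| tvar : Disc → Nat → Ty
| fcon : Nat → List Ty → Ty
| ex : Disc → Nat → Ty → Ty      -- ∃X:S.A
| all : Disc → Nat → Ty → Ty     -- ∀X:S.A

mutual
  /-- Substitution of a type for a type variable. -/
  def substTy : Ty → Nat → Ty → Ty
  | .tvar S Y, X, B => if Y = X then B else .tvar S Y
  | .fcon F Cs, X, B => .fcon F (substTyList Cs X B)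
  | .ex S Y A, X, B => if Y = X then .ex S Y A else .ex S Y (substTy A X B)
  | .all S Y A, X, B => if Y = X then .all S Y A else .all S Y (substTy A X B)

  def substTyList : List Ty → Nat → Ty → List Ty
  | [], _, _ => []
  | C :: Cs, X, B => substTy C X B :: substTyList Cs X B
end

/-- The signature of a single constructor (for data) or destructor (for
    codata): hidden/private type parameters Ȳ with their kinds, term inputs
    Ā, and coterm inputs B̄.  By convention the declaration's parameters X̄
    are referred to inside the component types as the type variables
    0, …, n−1 and the privates as n, n+1, …. -/
structure ConSig where
  tyArgs : List Disc
  tmArgs : List Ty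
  coArgs : List Ty

/-- A (co)data declaration: data F (X̄:k̄) : S with K_i : ∀Ȳᵢ. Āᵢ ⊢ F X̄ | B̄ᵢ,
    or dually codata G (X̄:k̄) : S with O_i : ∀Ȳᵢ. Āᵢ | G X̄ ⊢ B̄ᵢ. -/
structure Decl where
  isData : Bool
  params : List Disc
  disc : Disc
  sigs : List ConSig

/-- A global environment of declarations. -/
def GEnv : Type := Nat → Option Decl

mutual
  /-- Terms (producers). -/
  inductive Tm : Type
  | var : Nat → Tm
  | mu : Nat → Cmd → Tm                              -- μα.c
  | con : Nat → Nat → List Ty → CoTms → Tms → Tm     -- K_i B̄ ē v̄ of connective F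
  | cocase : Branches → Tm                           -- cocase{O X̄ x̄ ᾱ ⇒ c | …}
  | pack : Ty → Tm → Tm                              -- pack B W : ∃X:S.A
  | lamSpec : Nat → Nat → Cmd → Tm                   -- λ[spec X α].c : ∀X:S.A

  /-- Coterms (consumers). -/
  inductive CoTm : Type
  | covar : Nat → CoTm
  | mut : Nat → Cmd → CoTm                           -- μ̃x.c
  | des : Nat → Nat → List Ty → Tms → CoTms → CoTm   -- O_i B̄ v̄ ē of connective G
  | cases : Branches → CoTm                          -- case{K X̄ ᾱ x̄ ⇒ c | …}
  | spec : Ty → CoTm → CoTm                          -- spec B F : ∀X:S.A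
  | casePack : Nat → Nat → Cmd → CoTm                -- μ̃(pack X y).c : ∃X:S.A

  inductive Tms : Type
  | nil : Tms
  | cons : Tm → Tms → Tms

  inductive CoTms : Type
  | nil : CoTms
  | cons : CoTm → CoTms → CoTms

  /-- A branch binds private type variables, covariables, and variables. -/
  inductive Branch : Type
  | mk : List Nat → List Nat → List Nat → Cmd → Branch

  inductive Branches : Type
  | nil : Branches
  | cons : Branch → Branches → Branches

  /-- Commands, annotated by the discipline of the cut type. -/
  inductive Cmd : Type
  | cut : Tm → Disc → CoTm → Cmd
end

def Branches.get? : Branches → Nat → Option Branch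
| .nil, _ => none
| .cons b _, 0 => some b
| .cons _ bs, n+1 => bs.get? n

/- Substitution of a term for a variable. -/
mutual
  def substVTm : Tm → Nat → Tm → Tm
  | .var y, x, v => if y = x then v else .var y
  | .mu a c, x, v => .mu a (substVCmd c x v)
  | .con F i Bs es vs, x, v => .con F i Bs (substVCoTms es x v) (substVTms vs x v)
  | .cocase brs, x, v => .cocase (substVBrs brs x v)
  | .pack B w, x, v => .pack B (substVTm w x v)
  | .lamSpec X a c, x, v => .lamSpec X a (substVCmd c x v)

  def substVCo : CoTm → Nat → Tm → CoTm
  | .covar b, _, _ => .covar b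
  | .mut y c, x, v => if y = x then .mut y c else .mut y (substVCmd c x v)
  | .des F i Bs vs es, x, v => .des F i Bs (substVTms vs x v) (substVCoTms es x v)
  | .cases brs, x, v => .cases (substVBrs brs x v)
  | .spec B f, x, v => .spec B (substVCo f x v)
  | .casePack X y c, x, v =>
      if y = x then .casePack X y c else .casePack X y (substVCmd c x v)

  def substVTms : Tms → Nat → Tm → Tms
  | .nil, _, _ => .nil
  | .cons t ts, x, v => .cons (substVTm t x v) (substVTms ts x v)

  def substVCoTms : CoTms → Nat → Tm → CoTms
  | .nil, _, _ => .nil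
  | .cons e es, x, v => .cons (substVCo e x v) (substVCoTms es x v)

  def substVBr : Branch → Nat → Tm → Branch
  | .mk tys cvs xs c, x, v =>
      if x ∈ xs then .mk tys cvs xs c else .mk tys cvs xs (substVCmd c x v)

  def substVBrs : Branches → Nat → Tm → Branches
  | .nil, _, _ => .nil
  | .cons b bs, x, v => .cons (substVBr b x v) (substVBrs bs x v)

  def substVCmd : Cmd → Nat → Tm → Cmd
  | .cut t S e, x, v => .cut (substVTm t x v) S (substVCo e x v)
end

/- Substitution of a coterm for a covariable. -/
mutual
  def substETm : Tm → Nat → CoTm → Tm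
  | .var y, _, _ => .var y
  | .mu b c, a, e => if b = a then .mu b c else .mu b (substECmd c a e)
  | .con F i Bs es vs, a, e => .con F i Bs (substECoTms es a e) (substETms vs a e)
  | .cocase brs, a, e => .cocase (substEBrs brs a e)
  | .pack B w, a, e => .pack B (substETm w a e)
  | .lamSpec X b c, a, e =>
      if b = a then .lamSpec X b c else .lamSpec X b (substECmd c a e)

  def substECo : CoTm → Nat → CoTm → CoTm
  | .covar b, a, e => if b = a then e else .covar b
  | .mut y c, a, e => .mut y (substECmd c a e)
  | .des F i Bs vs es, a, e => .des F i Bs (substETms vs a e) (substECoTms es a e)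
  | .cases brs, a, e => .cases (substEBrs brs a e)
  | .spec B f, a, e => .spec B (substECo f a e)
  | .casePack X y c, a, e => .casePack X y (substECmd c a e)

  def substETms : Tms → Nat → CoTm → Tms
  | .nil, _, _ => .nil
  | .cons t ts, a, e => .cons (substETm t a e) (substETms ts a e)

  def substECoTms : CoTms → Nat → CoTm → CoTms
  | .nil, _, _ => .nil
  | .cons e' es, a, e => .cons (substECo e' a e) (substECoTms es a e)

  def substEBr : Branch → Nat → CoTm → Branch
  | .mk tys cvs xs c, a, e =>
      if a ∈ cvs then .mk tys cvs xs c else .mk tys cvs xs (substECmd c a e)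

  def substEBrs : Branches → Nat → CoTm → Branches
  | .nil, _, _ => .nil
  | .cons b bs, a, e => .cons (substEBr b a e) (substEBrs bs a e)

  def substECmd : Cmd → Nat → CoTm → Cmd
  | .cut t S e', a, e => .cut (substETm t a e) S (substECo e' a e)
end

/- Substitution of a type for a type variable in program syntax. -/
mutual
  def substTTm : Tm → Nat → Ty → Tm
  | .var y, _, _ => .var y
  | .mu a c, X, B => .mu a (substTCmd c X B)
  | .con F i Bs es vs, X, B =>
      .con F i (substTyList Bs X B) (substTCoTms es X B) (substTTms vs X B)
  | .cocase brs, X, B => .cocase (substTBrs brs X B)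
  | .pack C w, X, B => .pack (substTy C X B) (substTTm w X B)
  | .lamSpec Y a c, X, B =>
      if Y = X then .lamSpec Y a c else .lamSpec Y a (substTCmd c X B)

  def substTCo : CoTm → Nat → Ty → CoTm
  | .covar b, _, _ => .covar b
  | .mut y c, X, B => .mut y (substTCmd c X B)
  | .des F i Bs vs es, X, B =>
      .des F i (substTyList Bs X B) (substTTms vs X B) (substTCoTms es X B)
  | .cases brs, X, B => .cases (substTBrs brs X B)
  | .spec C f, X, B => .spec (substTy C X B) (substTCo f X B)
  | .casePack Y y c, X, B =>
      if Y = X then .casePack Y y c else .casePack Y y (substTCmd c X B)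

  def substTTms : Tms → Nat → Ty → Tms
  | .nil, _, _ => .nil
  | .cons t ts, X, B => .cons (substTTm t X B) (substTTms ts X B)

  def substTCoTms : CoTms → Nat → Ty → CoTms
  | .nil, _, _ => .nil
  | .cons e es, X, B => .cons (substTCo e X B) (substTCoTms es X B)

  def substTBr : Branch → Nat → Ty → Branch
  | .mk tys cvs xs c, X, B =>
      if X ∈ tys then .mk tys cvs xs c else .mk tys cvs xs (substTCmd c X B)

  def substTBrs : Branches → Nat → Ty → Branches
  | .nil, _, _ => .nil
  | .cons b bs, X, B => .cons (substTBr b X B) (substTBrs bs X B)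

  def substTCmd : Cmd → Nat → Ty → Cmd
  | .cut t S e, X, B => .cut (substTTm t X B) S (substTCo e X B)
end

/-- Iterated substitution of a list of terms for a list of variables. -/
def substVsCmd : Cmd → List Nat → Tms → Cmd
| c, [], _ => c
| c, _, .nil => c
| c, x :: xs, .cons v vs => substVsCmd (substVCmd c x v) xs vs

def substEsCmd : Cmd → List Nat → CoTms → Cmd
| c, [], _ => c
| c, _, .nil => c
| c, a :: as_, .cons e es => substEsCmd (substECmd c a e) as_ es

def substTsCmd : Cmd → List Nat → List Ty → Cmd
| c, [], _ => c
| c, _, [] => c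
| c, X :: Xs, B :: Bs => substTsCmd (substTCmd c X B) Xs Bs

/- Free (co)variables. -/
mutual
  def fvTm : Tm → List Nat
  | .var y => [y]
  | .mu _ c => fvCmd c
  | .con _ _ _ es vs => fvCoTms es ++ fvTms vs
  | .cocase brs => fvBrs brs
  | .pack _ w => fvTm w
  | .lamSpec _ _ c => fvCmd c

  def fvCo : CoTm → List Nat
  | .covar _ => []
  | .mut y c => (fvCmd c).filter (· ≠ y)
  | .des _ _ _ vs es => fvTms vs ++ fvCoTms es
  | .cases brs => fvBrs brs
  | .spec _ f => fvCo f
  | .casePack _ y c => (fvCmd c).filter (· ≠ y)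

  def fvTms : Tms → List Nat
  | .nil => []
  | .cons t ts => fvTm t ++ fvTms ts

  def fvCoTms : CoTms → List Nat
  | .nil => []
  | .cons e es => fvCo e ++ fvCoTms es

  def fvBr : Branch → List Nat
  | .mk _ _ xs c => (fvCmd c).filter (· ∉ xs)

  def fvBrs : Branches → List Nat
  | .nil => []
  | .cons b bs => fvBr b ++ fvBrs bs

  def fvCmd : Cmd → List Nat
  | .cut t _ e => fvTm t ++ fvCo e
end

mutual
  def fcvTm : Tm → List Nat
  | .var _ => []
  | .mu b c => (fcvCmd c).filter (· ≠ b)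
  | .con _ _ _ es vs => fcvCoTms es ++ fcvTms vs
  | .cocase brs => fcvBrs brs
  | .pack _ w => fcvTm w
  | .lamSpec _ b c => (fcvCmd c).filter (· ≠ b)

  def fcvCo : CoTm → List Nat
  | .covar b => [b]
  | .mut _ c => fcvCmd c
  | .des _ _ _ vs es => fcvTms vs ++ fcvCoTms es
  | .cases brs => fcvBrs brs
  | .spec _ f => fcvCo f
  | .casePack _ _ c => fcvCmd c

  def fcvTms : Tms → List Nat
  | .nil => []
  | .cons t ts => fcvTm t ++ fcvTms ts

  def fcvCoTms : CoTms → List Nat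
  | .nil => []
  | .cons e es => fcvCo e ++ fcvCoTms es

  def fcvBr : Branch → List Nat
  | .mk _ cvs _ c => (fcvCmd c).filter (· ∉ cvs)

  def fcvBrs : Branches → List Nat
  | .nil => []
  | .cons b bs => fcvBr b ++ fcvBrs bs

  def fcvCmd : Cmd → List Nat
  | .cut t _ e => fcvTm t ++ fcvCo e
end

/- Weak-head normal terms W and forcing coterms F. -/
mutual
  inductive IsW : Tm → Prop
  | var (x : Nat) : IsW (.var x)
  | con {es : CoTms} {vs : Tms} (F i : Nat) (Bs : List Ty) :
      AllF es → AllW vs → IsW (.con F i Bs es vs)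
  | cocase (brs : Branches) : IsW (.cocase brs)
  | pack {w : Tm} (B : Ty) : IsW w → IsW (.pack B w)
  | lamSpec (X a : Nat) (c : Cmd) : IsW (.lamSpec X a c)

  inductive AllW : Tms → Prop
  | nil : AllW .nil
  | cons {t : Tm} {ts : Tms} : IsW t → AllW ts → AllW (.cons t ts)

  inductive IsF : CoTm → Prop
  | covar (a : Nat) : IsF (.covar a)
  | des {vs : Tms} {es : CoTms} (F i : Nat) (Bs : List Ty) :
      AllW vs → AllF es → IsF (.des F i Bs vs es)
  | cases (brs : Branches) : IsF (.cases brs)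
  | spec {f : CoTm} (B : Ty) : IsF f → IsF (.spec B f)
  | casePack (X y : Nat) (c : Cmd) : IsF (.casePack X y c)

  inductive AllF : CoTms → Prop
  | nil : AllF .nil
  | cons {e : CoTm} {es : CoTms} : IsF e → AllF es → AllF (.cons e es)
end

/-- Heap contexts: stacks of delayed call-by-need variable bindings and
    call-by-coneed covariable bindings:
    H ::= □ | ⟨v ‖ μ̃x.H⟩ (at lv) | ⟨μα.H ‖ e⟩ (at ln). -/
inductive Heap : Type
| hole : Heap
| lvBind : Tm → Nat → Heap → Heap
| lnBind : Nat → Heap → CoTm → Heap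

def Heap.fill : Heap → Cmd → Cmd
| .hole, c => c
| .lvBind v x H, c => .cut v .lv (.mut x (H.fill c))
| .lnBind a H e, c => .cut (.mu a (H.fill c)) .ln e

def Heap.BindsVar : Heap → Nat → Prop
| .hole, _ => False
| .lvBind _ x H, y => x = y ∨ H.BindsVar y
| .lnBind _ H _, y => H.BindsVar y

def Heap.BindsCovar : Heap → Nat → Prop
| .hole, _ => False
| .lvBind _ _ H, b => H.BindsCovar b
| .lnBind a H _, b => a = b ∨ H.BindsCovar b

/-- Discipline-indexed values:  V₊ = W,  V₋ = any term,  V_lv = W,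
    V_ln = W or μα.H[⟨V_ln ‖ α⟩] where H does not rebind α. -/
inductive Val : Disc → Tm → Prop
| pos {v : Tm} : IsW v → Val .pos v
| neg (v : Tm) : Val .neg v
| lv {v : Tm} : IsW v → Val .lv v
| lnW {v : Tm} : IsW v → Val .ln v
| lnMu {v : Tm} {H : Heap} (a : Nat) :
    Val .ln v → ¬ H.BindsCovar a →
    Val .ln (.mu a (H.fill (.cut v .ln (.covar a))))

/-- Discipline-indexed covalues:  E₊ = any coterm,  E₋ = F,  E_ln = F,
    E_lv = F or μ̃x.H[⟨x ‖ E_lv⟩] where H does not rebind x. -/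
inductive Coval : Disc → CoTm → Prop
| pos (e : CoTm) : Coval .pos e
| neg {e : CoTm} : IsF e → Coval .neg e
| ln {e : CoTm} : IsF e → Coval .ln e
| lvF {e : CoTm} : IsF e → Coval .lv e
| lvMut {e : CoTm} {H : Heap} (x : Nat) :
    Coval .lv e → ¬ H.BindsVar x →
    Coval .lv (.mut x (H.fill (.cut (.var x) .lv e)))

/-- The standard (operational) reduction of System D/CD. -/
inductive Step : Cmd → Cmd → Prop
| betaMu {S : Disc} {e : CoTm} (a : Nat) (c : Cmd) :
    S ≠ .ln → Coval S e →
    Step (.cut (.mu a c) S e) (substECmd c a e)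
| betaMut {S : Disc} {v : Tm} (x : Nat) (c : Cmd) :
    S ≠ .lv → Val S v →
    Step (.cut v S (.mut x c)) (substVCmd c x v)
| betaMuConeed {e : CoTm} (a : Nat) (c : Cmd) :
    Val .ln (.mu a c) → (∀ b, e ≠ .covar b) → Coval .ln e →
    Step (.cut (.mu a c) .ln e) (substECmd c a e)
| betaMutNeed {v : Tm} (x : Nat) (c : Cmd) :
    Coval .lv (.mut x c) → (∀ y, v ≠ .var y) → Val .lv v →
    Step (.cut v .lv (.mut x c)) (substVCmd c x v)
| betaP {es : CoTms} {vs : Tms} {brs : Branches}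
    (F i : Nat) (Bs : List Ty) (S : Disc) (tys cvs xs : List Nat) (c : Cmd) :
    brs.get? i = some (.mk tys cvs xs c) →
    AllF es → AllW vs →
    Step (.cut (.con F i Bs es vs) S (.cases brs))
         (substVsCmd (substEsCmd (substTsCmd c tys Bs) cvs es) xs vs)
| betaQ {vs : Tms} {es : CoTms} {brs : Branches}
    (F i : Nat) (Bs : List Ty) (S : Disc) (tys xs cvs : List Nat) (c : Cmd) :
    brs.get? i = some (.mk tys cvs xs c) →
    AllW vs → AllF es →
    Step (.cut (.cocase brs) S (.des F i Bs vs es))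
         (substEsCmd (substVsCmd (substTsCmd c tys Bs) xs vs) cvs es)
| betaPack {w : Tm} (B : Ty) (X y : Nat) (c : Cmd) :
    IsW w →
    Step (.cut (.pack B w) .pos (.casePack X y c))
         (substVCmd (substTCmd c X B) y w)
| betaSpec {f : CoTm} (B : Ty) (X a : Nat) (c : Cmd) :
    IsF f →
    Step (.cut (.lamSpec X a c) .neg (.spec B f))
         (substECmd (substTCmd c X B) a f)
| heap {c c' : Cmd} (H : Heap) :
    Step c c' → Step (H.fill c) (H.fill c')

/-- A command that admits no standard reduction step. -/
def Irred (c : Cmd) : Prop := ¬ ∃ c', Step c c'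

/-- `x` is a needed variable of `c`. -/
def NeededVar (c : Cmd) (x : Nat) : Prop :=
  Irred c ∧ ∃ (H : Heap) (S : Disc) (E : CoTm),
    Coval S E ∧ ¬ H.BindsVar x ∧ c = H.fill (.cut (.var x) S E)

/-- `a` is a needed covariable of `c`. -/
def NeededCovar (c : Cmd) (a : Nat) : Prop :=
  Irred c ∧ ∃ (H : Heap) (S : Disc) (V : Tm),
    Val S V ∧ ¬ H.BindsCovar a ∧ c = H.fill (.cut V S (.covar a))

/-- A command is finished when it needs some (co)variable. -/
def Finished (c : Cmd) : Prop :=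
  Irred c ∧ ∃ z, NeededVar c z ∨ NeededCovar c z

/-- A command is stuck when it cannot step and needs no (co)variable. -/
def Stuck (c : Cmd) : Prop :=
  Irred c ∧ ¬ ∃ z, NeededVar c z ∨ NeededCovar c z

end SysD

namespace SysD

/-! ### Auxiliary development -/

/-- Composition of heap contexts: fill the hole of `H` with `K`. -/
def Heap.comp : Heap → Heap → Heap
| .hole, K => K
| .lvBind v x H, K => .lvBind v x (H.comp K)
| .lnBind a H e, K => .lnBind a (H.comp K) e

lemma Heap.comp_fill : ∀ (H K : Heap) (c : Cmd), (H.comp K).fill c = H.fill (K.fill c)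
| .hole, _, _ => rfl
| .lvBind v x H, K, c => by simp only [Heap.comp, Heap.fill, Heap.comp_fill H K c]
| .lnBind a H e, K, c => by simp only [Heap.comp, Heap.fill, Heap.comp_fill H K c]

lemma Heap.comp_bindsVar : ∀ (H K : Heap) (x : Nat),
    (H.comp K).BindsVar x ↔ H.BindsVar x ∨ K.BindsVar x
| .hole, K, x => by simp [Heap.comp, Heap.BindsVar]
| .lvBind v y H, K, x => by
    simp [Heap.comp, Heap.BindsVar, Heap.comp_bindsVar H K x, or_assoc]
| .lnBind a H e, K, x => by
    simp [Heap.comp, Heap.BindsVar, Heap.comp_bindsVar H K x]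

lemma Heap.comp_bindsCovar : ∀ (H K : Heap) (a : Nat),
    (H.comp K).BindsCovar a ↔ H.BindsCovar a ∨ K.BindsCovar a
| .hole, K, a => by simp [Heap.comp, Heap.BindsCovar]
| .lvBind v y H, K, a => by
    simp [Heap.comp, Heap.BindsCovar, Heap.comp_bindsCovar H K a]
| .lnBind b H e, K, a => by
    simp [Heap.comp, Heap.BindsCovar, Heap.comp_bindsCovar H K a, or_assoc]

/-- Two decompositions of a command by heap contexts are linearly ordered. -/
lemma fill_eq : ∀ (H H' : Heap) (c c' : Cmd), H.fill c = H'.fill c' →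
    (∃ K, H' = H.comp K ∧ c = K.fill c') ∨ (∃ K, H = H'.comp K ∧ c' = K.fill c)
| .hole, H', c, c', h => .inl ⟨H', rfl, h⟩
| .lvBind v x H, .hole, c, c', h => .inr ⟨.lvBind v x H, rfl, h.symm⟩
| .lvBind v x H, .lvBind v' x' H', c, c', h => by
    simp only [Heap.fill, Cmd.cut.injEq, CoTm.mut.injEq] at h
    obtain ⟨rfl, -, rfl, h4⟩ := h
    rcases fill_eq H H' c c' h4 with ⟨K, rfl, hc⟩ | ⟨K, rfl, hc⟩
    · exact .inl ⟨K, rfl, hc⟩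
    · exact .inr ⟨K, rfl, hc⟩
| .lvBind v x H, .lnBind a H' e, c, c', h => by
    simp only [Heap.fill, Cmd.cut.injEq] at h
    exact absurd h.2.1 (by simp)
| .lnBind a H e, .hole, c, c', h => .inr ⟨.lnBind a H e, rfl, h.symm⟩
| .lnBind a H e, .lvBind v x H', c, c', h => by
    simp only [Heap.fill, Cmd.cut.injEq] at h
    exact absurd h.2.1 (by simp)
| .lnBind a H e, .lnBind a' H' e', c, c', h => by
    simp only [Heap.fill, Cmd.cut.injEq, Tm.mu.injEq] at h
    obtain ⟨⟨rfl, h4⟩, -, rfl⟩ := h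
    rcases fill_eq H H' c c' h4 with ⟨K, rfl, hc⟩ | ⟨K, rfl, hc⟩
    · exact .inl ⟨K, rfl, hc⟩
    · exact .inr ⟨K, rfl, hc⟩

/-- A demand for a variable (`Sum.inl`) or covariable (`Sum.inr`) at the
    head of a cut. -/
inductive DemCut : (Nat ⊕ Nat) → Cmd → Prop
| v {x : Nat} {E : CoTm} : Coval .lv E → DemCut (.inl x) (.cut (.var x) .lv E)
| a {a : Nat} {V : Tm} : Val .ln V → DemCut (.inr a) (.cut V .ln (.covar a))

/-- `H` does not bind the demanded (co)variable. -/
def NB (H : Heap) : (Nat ⊕ Nat) → Prop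
| .inl x => ¬ H.BindsVar x
| .inr a => ¬ H.BindsCovar a

/-- `m` demands the (co)variable `z`. -/
def Dem (m : Cmd) (z : Nat ⊕ Nat) : Prop :=
  ∃ (H : Heap) (s : Cmd), DemCut z s ∧ NB H z ∧ m = H.fill s

lemma coval_mut_inv {z : Nat} {m : Cmd} (h : Coval .lv (.mut z m)) :
    Dem m (.inl z) := by
  cases h with
  | lvF hf => cases hf
  | lvMut x hc hb => exact ⟨_, _, .v hc, hb, rfl⟩

lemma val_mu_inv {b : Nat} {m : Cmd} (h : Val .ln (.mu b m)) :
    Dem m (.inr b) := by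
  cases h with
  | lnW hw => cases hw
  | lnMu a hv hb => exact ⟨_, _, .a hv, hb, rfl⟩

lemma size_fill : ∀ (H : Heap) (c : Cmd), sizeOf c ≤ sizeOf (H.fill c)
| .hole, c => le_refl _
| .lvBind v x H, c => by
    have := size_fill H c
    simp only [Heap.fill]
    simp only [Cmd.cut.sizeOf_spec, CoTm.mut.sizeOf_spec]
    omega
| .lnBind a H e, c => by
    have := size_fill H c
    simp only [Heap.fill]
    simp only [Cmd.cut.sizeOf_spec, Tm.mu.sizeOf_spec]
    omega

lemma cmd_size_pos (m : Cmd) : 1 ≤ sizeOf m := by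
  cases m with
  | cut t S e => simp only [Cmd.cut.sizeOf_spec]; omega

/-- Uniqueness of the demanded (co)variable. -/
lemma uniq : ∀ (n : Nat) (m : Cmd), sizeOf m ≤ n →
    ∀ z w, Dem m z → Dem m w → z = w := by
  intro n
  induction n with
  | zero => intro m hm; exact absurd (cmd_size_pos m) (by omega)
  | succ n ih =>
    intro m hm z w hz hw
    -- the asymmetric core
    have main : ∀ (z w : Nat ⊕ Nat) (K : Heap) (s1 s2 : Cmd),
        DemCut z s1 → DemCut w s2 → NB K w → s1 = K.fill s2 →
        sizeOf s1 ≤ n + 1 → z = w := by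
      intro z w K s1 s2 d1 d2 nb hK hs
      cases d1 with
      | v hE =>
        rename_i x E
        cases K with
        | hole =>
          cases d2 with
          | v hE2 =>
            simp only [Heap.fill, Cmd.cut.injEq, Tm.var.injEq] at hK
            exact congrArg Sum.inl hK.1
          | a hV2 =>
            simp only [Heap.fill, Cmd.cut.injEq] at hK
            exact absurd hK.2.1 (by simp)
        | lvBind v0 z0 K' =>
          simp only [Heap.fill, Cmd.cut.injEq] at hK
          obtain ⟨-, -, hE'⟩ := hK
          rw [hE'] at hE
          have h1 : Dem (K'.fill s2) (.inl z0) := coval_mut_inv hE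
          have hnb' : NB K' w := by
            cases w with
            | inl y =>
              simp only [NB, Heap.BindsVar] at nb ⊢; exact fun h => nb (Or.inr h)
            | inr b =>
              simp only [NB, Heap.BindsVar] at nb ⊢; exact nb
          have h2 : Dem (K'.fill s2) w := ⟨K', s2, d2, hnb', rfl⟩
          have hsz : sizeOf (K'.fill s2) ≤ n := by
            have := size_fill K' s2
            have h0 : sizeOf E = sizeOf (CoTm.mut z0 (K'.fill s2)) := by rw [hE']
            simp only [CoTm.mut.sizeOf_spec] at h0
            simp only [Cmd.cut.sizeOf_spec] at hs
            omega
          have := ih (K'.fill s2) hsz _ _ h1 h2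
          cases w with
          | inl y =>
            injection this with h'
            subst h'
            exact absurd (Or.inl rfl) nb
          | inr b => exact absurd this (by simp)
        | lnBind b0 K' e0 =>
          simp only [Heap.fill, Cmd.cut.injEq] at hK
          exact absurd hK.2.1 (by simp)
      | a hV =>
        rename_i a V
        cases K with
        | hole =>
          cases d2 with
          | v hE2 =>
            simp only [Heap.fill, Cmd.cut.injEq] at hK
            exact absurd hK.2.1 (by simp)
          | a hV2 =>
            simp only [Heap.fill, Cmd.cut.injEq, CoTm.covar.injEq] at hK
            exact congrArg Sum.inr hK.2.2
        | lvBind v0 z0 K' =>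
          simp only [Heap.fill, Cmd.cut.injEq] at hK
          exact absurd hK.2.1 (by simp)
        | lnBind b0 K' e0 =>
          simp only [Heap.fill, Cmd.cut.injEq] at hK
          obtain ⟨hV', -, -⟩ := hK
          rw [hV'] at hV
          have h1 : Dem (K'.fill s2) (.inr b0) := val_mu_inv hV
          have hnb' : NB K' w := by
            cases w with
            | inl y =>
              simp only [NB, Heap.BindsVar] at nb ⊢; exact nb
            | inr b =>
              simp only [NB, Heap.BindsCovar] at nb ⊢; exact fun h => nb (Or.inr h)
          have h2 : Dem (K'.fill s2) w := ⟨K', s2, d2, hnb', rfl⟩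
          have hsz : sizeOf (K'.fill s2) ≤ n := by
            have := size_fill K' s2
            have h0 : sizeOf V = sizeOf (Tm.mu b0 (K'.fill s2)) := by rw [hV']
            simp only [Tm.mu.sizeOf_spec] at h0
            simp only [Cmd.cut.sizeOf_spec] at hs
            omega
          have := ih (K'.fill s2) hsz _ _ h1 h2
          cases w with
          | inl y => exact absurd this (by simp)
          | inr b =>
            injection this with h'
            subst h'
            exact absurd (Or.inl rfl) nb
    obtain ⟨H1, s1, d1, nb1, rfl⟩ := hz
    obtain ⟨H2, s2, d2, nb2, heq⟩ := hw
    rcases fill_eq H1 H2 s1 s2 heq with ⟨K, rfl, hs⟩ | ⟨K, rfl, hs⟩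
    · have nbK : NB K w := by
        cases w with
        | inl y =>
          simp only [NB, Heap.comp_bindsVar] at nb2 ⊢
          exact fun h => nb2 (Or.inr h)
        | inr b =>
          simp only [NB, Heap.comp_bindsCovar] at nb2 ⊢
          exact fun h => nb2 (Or.inr h)
      exact main z w K s1 s2 d1 d2 nbK hs (le_trans (size_fill H1 s1) hm)
    · have nbK : NB K z := by
        cases z with
        | inl y =>
          simp only [NB, Heap.comp_bindsVar] at nb1 ⊢
          exact fun h => nb1 (Or.inr h)
        | inr b =>
          simp only [NB, Heap.comp_bindsCovar] at nb1 ⊢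
          exact fun h => nb1 (Or.inr h)
      have hm2 : sizeOf s2 ≤ n + 1 := by
        rw [heq] at hm
        exact le_trans (size_fill H2 s2) hm
      exact (main w z K s2 s1 d2 d1 nbK hs hm2).symm

/-- A command in "needy" normal form. -/
def NF (m : Cmd) : Prop := ∃ z, Dem m z

/-- The shape conditions satisfied by every top-level redex. -/
def GoodRedex (r : Cmd) : Prop :=
  (∀ x E, r ≠ .cut (.var x) .lv E) ∧
  (∀ V a, r ≠ .cut V .ln (.covar a)) ∧
  (∀ v z m, r = .cut v .lv (.mut z m) → Coval .lv (.mut z m)) ∧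
  (∀ b m e, r = .cut (.mu b m) .ln e → Val .ln (.mu b m))

lemma good_not_NF : ∀ (n : Nat) (r : Cmd), GoodRedex r → ∀ (H0 : Heap),
    sizeOf (H0.fill r) ≤ n → ¬ NF (H0.fill r) := by
  intro n
  induction n with
  | zero => intro r _ H0 h
            exact absurd (cmd_size_pos (H0.fill r)) (by omega)
  | succ n ih =>
    intro r hg H0 hsz ⟨w, H1, s1, d1, nb1, heq⟩
    rcases fill_eq H0 H1 r s1 heq with ⟨K, rfl, hr⟩ | ⟨K, rfl, hs1⟩
    · -- the needy cut is at least as deep as the redex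
      have nbK : NB K w := by
        cases w with
        | inl y =>
          simp only [NB, Heap.comp_bindsVar] at nb1 ⊢
          exact fun h => nb1 (Or.inr h)
        | inr b =>
          simp only [NB, Heap.comp_bindsCovar] at nb1 ⊢
          exact fun h => nb1 (Or.inr h)
      cases K with
      | hole =>
        cases d1 with
        | v hE => exact hg.1 _ _ hr
        | a hV => exact hg.2.1 _ _ hr
      | lvBind v0 z0 K' =>
        have hC : Coval .lv (.mut z0 (K'.fill s1)) := hg.2.2.1 _ _ _ hr
        have h1 : Dem (K'.fill s1) (.inl z0) := coval_mut_inv hC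
        have hnb' : NB K' w := by
          cases w with
          | inl y =>
            simp only [NB, Heap.BindsVar] at nbK ⊢; exact fun h => nbK (Or.inr h)
          | inr b =>
            simp only [NB, Heap.BindsVar] at nbK ⊢; exact nbK
        have h2 : Dem (K'.fill s1) w := ⟨K', s1, d1, hnb', rfl⟩
        have := uniq (sizeOf (K'.fill s1)) _ le_rfl _ _ h1 h2
        cases d1 with
        | v hE =>
          injection this with h'
          subst h'
          exact absurd (Or.inl rfl) nbK
        | a hV => exact absurd this (by simp)
      | lnBind b0 K' e0 =>
        have hV : Val .ln (.mu b0 (K'.fill s1)) := hg.2.2.2 _ _ _ hr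
        have h1 : Dem (K'.fill s1) (.inr b0) := val_mu_inv hV
        have hnb' : NB K' w := by
          cases w with
          | inl y =>
            simp only [NB, Heap.BindsVar] at nbK ⊢; exact nbK
          | inr b =>
            simp only [NB, Heap.BindsCovar] at nbK ⊢; exact fun h => nbK (Or.inr h)
        have h2 : Dem (K'.fill s1) w := ⟨K', s1, d1, hnb', rfl⟩
        have := uniq (sizeOf (K'.fill s1)) _ le_rfl _ _ h1 h2
        cases d1 with
        | v hE => exact absurd this (by simp)
        | a hV2 =>
          injection this with h'
          subst h'
          exact absurd (Or.inl rfl) nbK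
    · -- the redex is strictly inside the needy cut
      cases K with
      | hole =>
        cases d1 with
        | v hE => exact hg.1 _ _ hs1.symm
        | a hV => exact hg.2.1 _ _ hs1.symm
      | lvBind v0 z0 K' =>
        cases d1 with
        | v hE =>
          rename_i x E
          simp only [Heap.fill, Cmd.cut.injEq] at hs1
          obtain ⟨-, -, hE'⟩ := hs1
          rw [hE'] at hE
          have h1 : Dem (K'.fill r) (.inl z0) := coval_mut_inv hE
          have hszr : sizeOf (K'.fill r) ≤ n := by
            have hle := size_fill K' r
            have h1sz := size_fill H1 (Cmd.cut (.var x) .lv E)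
            have h0 : sizeOf E = sizeOf (CoTm.mut z0 (K'.fill r)) := by rw [hE']
            simp only [CoTm.mut.sizeOf_spec] at h0
            simp only [Cmd.cut.sizeOf_spec] at h1sz
            rw [heq] at hsz
            omega
          exact ih r hg K' hszr ⟨_, h1⟩
        | a hV =>
          simp only [Heap.fill, Cmd.cut.injEq] at hs1
          exact absurd hs1.2.1 (by simp)
      | lnBind b0 K' e0 =>
        cases d1 with
        | v hE =>
          simp only [Heap.fill, Cmd.cut.injEq] at hs1
          exact absurd hs1.2.1 (by simp)
        | a hV =>
          rename_i a V
          simp only [Heap.fill, Cmd.cut.injEq] at hs1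
          obtain ⟨hV', -, -⟩ := hs1
          rw [hV'] at hV
          have h1 : Dem (K'.fill r) (.inr b0) := val_mu_inv hV
          have hszr : sizeOf (K'.fill r) ≤ n := by
            have hle := size_fill K' r
            have h1sz := size_fill H1 (Cmd.cut V .ln (.covar a))
            have h0 : sizeOf V = sizeOf (Tm.mu b0 (K'.fill r)) := by rw [hV']
            simp only [Tm.mu.sizeOf_spec] at h0
            simp only [Cmd.cut.sizeOf_spec] at h1sz
            rw [heq] at hsz
            omega
          exact ih r hg K' hszr ⟨_, h1⟩

/-- No reduct of a standard step can be decomposed as a needy normal form,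
    even under an extra heap context. -/
lemma step_not_NF : ∀ (c c' : Cmd), Step c c' → ∀ (H0 : Heap), ¬ NF (H0.fill c) := by
  intro c c' h
  induction h with
  | heap H hstep ih =>
    intro H0
    have := ih (H0.comp H)
    rwa [Heap.comp_fill] at this
  | betaMu a c hS hC =>
    intro H0
    refine good_not_NF _ _ ?_ H0 le_rfl
    refine ⟨?_, ?_, ?_, ?_⟩
    · intro x E h; simp only [Cmd.cut.injEq] at h; exact absurd h.1 (by simp)
    · intro V b h; simp only [Cmd.cut.injEq] at h; exact hS h.2.1
    · intro v z m h; simp only [Cmd.cut.injEq] at h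
      rw [← h.2.2, ← h.2.1]; exact hC
    · intro b m e h; simp only [Cmd.cut.injEq] at h; exact absurd h.2.1 hS
  | betaMut x c hS hV =>
    intro H0
    refine good_not_NF _ _ ?_ H0 le_rfl
    refine ⟨?_, ?_, ?_, ?_⟩
    · intro y E h; simp only [Cmd.cut.injEq] at h; exact hS h.2.1
    · intro V b h; simp only [Cmd.cut.injEq] at h; exact absurd h.2.2 (by simp)
    · intro v z m h; simp only [Cmd.cut.injEq] at h; exact absurd h.2.1 hS
    · intro b m e h; simp only [Cmd.cut.injEq] at h
      rw [← h.1, ← h.2.1]; exact hV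
  | betaMuConeed a c hVal hne hC =>
    intro H0
    refine good_not_NF _ _ ?_ H0 le_rfl
    refine ⟨?_, ?_, ?_, ?_⟩
    · intro x E h; simp only [Cmd.cut.injEq] at h; exact absurd h.2.1 (by simp)
    · intro V b h; simp only [Cmd.cut.injEq] at h; exact hne b h.2.2
    · intro v z m h; simp only [Cmd.cut.injEq] at h; exact absurd h.2.1 (by simp)
    · intro b m e h; simp only [Cmd.cut.injEq] at h; rw [← h.1]; exact hVal
  | betaMutNeed x c hC hne hV =>
    intro H0
    refine good_not_NF _ _ ?_ H0 le_rfl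
    refine ⟨?_, ?_, ?_, ?_⟩
    · intro y E h; simp only [Cmd.cut.injEq] at h; exact hne y h.1
    · intro V b h; simp only [Cmd.cut.injEq] at h; exact absurd h.2.1 (by simp)
    · intro v z m h; simp only [Cmd.cut.injEq] at h; rw [← h.2.2]; exact hC
    · intro b m e h; simp only [Cmd.cut.injEq] at h; exact absurd h.2.1 (by simp)
  | betaP F i Bs S tys cvs xs c hbr hF hW =>
    intro H0
    refine good_not_NF _ _ ?_ H0 le_rfl
    refine ⟨?_, ?_, ?_, ?_⟩
    · intro x E h; simp only [Cmd.cut.injEq] at h; exact absurd h.1 (by simp)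
    · intro V b h; simp only [Cmd.cut.injEq] at h; exact absurd h.2.2 (by simp)
    · intro v z m h; simp only [Cmd.cut.injEq] at h; exact absurd h.2.2 (by simp)
    · intro b m e h; simp only [Cmd.cut.injEq] at h; exact absurd h.1 (by simp)
  | betaQ F i Bs S tys xs cvs c hbr hW hF =>
    intro H0
    refine good_not_NF _ _ ?_ H0 le_rfl
    refine ⟨?_, ?_, ?_, ?_⟩
    · intro x E h; simp only [Cmd.cut.injEq] at h; exact absurd h.1 (by simp)
    · intro V b h; simp only [Cmd.cut.injEq] at h; exact absurd h.2.2 (by simp)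
    · intro v z m h; simp only [Cmd.cut.injEq] at h; exact absurd h.2.2 (by simp)
    · intro b m e h; simp only [Cmd.cut.injEq] at h; exact absurd h.1 (by simp)
  | betaPack B X y c hW =>
    intro H0
    refine good_not_NF _ _ ?_ H0 le_rfl
    refine ⟨?_, ?_, ?_, ?_⟩
    · intro x E h; simp only [Cmd.cut.injEq] at h; exact absurd h.2.1 (by simp)
    · intro V b h; simp only [Cmd.cut.injEq] at h; exact absurd h.2.1 (by simp)
    · intro v z m h; simp only [Cmd.cut.injEq] at h; exact absurd h.2.1 (by simp)
    · intro b m e h; simp only [Cmd.cut.injEq] at h; exact absurd h.2.1 (by simp)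
  | betaSpec B X a c hF =>
    intro H0
    refine good_not_NF _ _ ?_ H0 le_rfl
    refine ⟨?_, ?_, ?_, ?_⟩
    · intro x E h; simp only [Cmd.cut.injEq] at h; exact absurd h.2.1 (by simp)
    · intro V b h; simp only [Cmd.cut.injEq] at h; exact absurd h.2.1 (by simp)
    · intro v z m h; simp only [Cmd.cut.injEq] at h; exact absurd h.2.1 (by simp)
    · intro b m e h; simp only [Cmd.cut.injEq] at h; exact absurd h.2.1 (by simp)

/-- if μ̃x.c is a call-by-need covalue then its body c admits no
    standard reduction step; dually, if μα.c is a call-by-coneed value then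
    c admits no standard reduction step. -/
theorem coneed_need_normal_bodies :
    (∀ (x : Nat) (c : Cmd), Coval .lv (.mut x c) → ¬ ∃ c', Step c c') ∧
    (∀ (a : Nat) (c : Cmd), Val .ln (.mu a c) → ¬ ∃ c', Step c c') := by
  constructor
  · rintro x c hc ⟨c', hstep⟩
    exact step_not_NF c c' hstep .hole ⟨_, coval_mut_inv hc⟩
  · rintro a c hc ⟨c', hstep⟩
    exact step_not_NF c c' hstep .hole ⟨_, val_mu_inv hc⟩

end SysD
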